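/- With T⁺, T⁻ as in the adjointness lemma: if (a,b) ∈ L²([-1,1])² satisfies T⁺[a,b] = 0 and T⁻[a,b] = 0, and (u,v) ∈ L²([-1,1])² satisfies T⁺[u,v] = -W⁺/n and T⁻[u,v] = -W⁻/n for some W⁺, W⁻ ∈ L²([-1,1]) and n ≥ 1, then -∫_{-1}^1 W⁺ φ' a dz + ∫_{-1}^1 W⁻ φ' b dz = 0. -/

import Mathlib

open Real MeasureTheory Set

noncomputable def Tplus (Λp φ' : ℝ → ℝ) (ε : ℝ) (n : ℕ) (u v : ℝ → ℝ) : ℝ → ℝ :=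
  fun z => Λp z * u z
    - (ε / (2 * n)) * (∫ w in Icc (-1:ℝ) 1, φ' w * u w * Real.exp (-(ε * n) * |z - w|))
    + (ε * Real.exp (-2 * (n : ℝ)) / (2 * n)) *
        (∫ w in Icc (-1:ℝ) 1, φ' w * v w * Real.exp (-((n : ℝ) * ε) * (z + w)))

noncomputable def Tminus (Λm φ' : ℝ → ℝ) (ε : ℝ) (n : ℕ) (u v : ℝ → ℝ) : ℝ → ℝ :=
  fun z => Λm z * v z
    + (ε / (2 * n)) * (∫ w in Icc (-1:ℝ) 1, φ' w * v w * Real.exp (-(ε * n) * |z - w|))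
    - (ε * Real.exp (-2 * (n : ℝ)) / (2 * n)) *
        (∫ w in Icc (-1:ℝ) 1, φ' w * u w * Real.exp (-((n : ℝ) * ε) * (z + w)))

section FredholmAux

open Filter

noncomputable def muIcc : Measure ℝ := MeasureTheory.volume.restrict (Icc (-1:ℝ) 1)

instance : IsFiniteMeasure muIcc := by
  constructor
  rw [muIcc, Measure.restrict_apply_univ, Real.volume_Icc]
  exact ENNReal.ofReal_lt_top

lemma aux_mulL2 (f g : ℝ → ℝ) (hf : MemLp f 2 muIcc) (hg : MemLp g 2 muIcc) :
    Integrable (fun z => f z * g z) muIcc := by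
  refine Integrable.mono' ((hf.integrable_sq.add hg.integrable_sq).const_mul (1/2))
    (hf.1.mul hg.1) ?_
  filter_upwards with z
  simp only [Pi.add_apply]
  rw [Real.norm_eq_abs, abs_mul]
  nlinarith [sq_nonneg (|f z| - |g z|), sq_abs (f z), sq_abs (g z),
    abs_nonneg (f z), abs_nonneg (g z)]

lemma aux_int_mul_J (F P : ℝ → ℝ) (hF : Integrable F muIcc) (hP : Integrable P muIcc)
    (K : ℝ → ℝ → ℝ) (hK : Measurable fun p : ℝ × ℝ => K p.1 p.2) (B : ℝ)
    (hKb : ∀ z ∈ Icc (-1:ℝ) 1, ∀ w ∈ Icc (-1:ℝ) 1, |K z w| ≤ B) :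
    Integrable (fun z => F z * ∫ w, P w * K z w ∂muIcc) muIcc := by
  have hJm : AEStronglyMeasurable (fun z => ∫ w, P w * K z w ∂muIcc) muIcc :=
    (hP.1.comp_snd.mul hK.aestronglyMeasurable).integral_prod_right'
  set C : ℝ := max B 0 * ∫ w, |P w| ∂muIcc with hC
  refine Integrable.mono' (hF.abs.const_mul C) (hF.1.mul hJm) ?_
  have hz : ∀ᵐ z ∂muIcc, z ∈ Icc (-1:ℝ) 1 := ae_restrict_mem measurableSet_Icc
  filter_upwards [hz] with z hz
  have hJb : |∫ w, P w * K z w ∂muIcc| ≤ C := by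
    rw [← Real.norm_eq_abs]
    refine le_trans (norm_integral_le_integral_norm _) ?_
    have h2 : ∫ w, ‖P w * K z w‖ ∂muIcc ≤ ∫ w, max B 0 * |P w| ∂muIcc := by
      refine integral_mono_of_nonneg (Eventually.of_forall fun w => norm_nonneg _)
        (hP.abs.const_mul _) ?_
      have hw : ∀ᵐ w ∂muIcc, w ∈ Icc (-1:ℝ) 1 := ae_restrict_mem measurableSet_Icc
      filter_upwards [hw] with w hw
      rw [Real.norm_eq_abs, abs_mul, mul_comm]
      exact mul_le_mul_of_nonneg_right ((hKb z hz w hw).trans (le_max_left _ _))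
        (abs_nonneg _)
    rw [hC, ← integral_const_mul]
    exact h2
  rw [Real.norm_eq_abs, abs_mul, mul_comm]
  exact mul_le_mul_of_nonneg_right hJb (abs_nonneg _)

lemma aux_swap (f g : ℝ → ℝ) (hf : Integrable f muIcc) (hg : Integrable g muIcc)
    (K : ℝ → ℝ → ℝ) (hK : Measurable fun p : ℝ × ℝ => K p.1 p.2) (B : ℝ)
    (hKb : ∀ z ∈ Icc (-1:ℝ) 1, ∀ w ∈ Icc (-1:ℝ) 1, |K z w| ≤ B)
    (hsym : ∀ z w, K z w = K w z) :
    ∫ z, f z * ∫ w, g w * K z w ∂muIcc ∂muIcc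
      = ∫ z, g z * ∫ w, f w * K z w ∂muIcc ∂muIcc := by
  have hmem : ∀ᵐ p ∂(muIcc.prod muIcc), p ∈ (Icc (-1:ℝ) 1) ×ˢ (Icc (-1:ℝ) 1) := by
    rw [muIcc, Measure.prod_restrict]
    exact ae_restrict_mem (measurableSet_Icc.prod measurableSet_Icc)
  have hint : Integrable (fun p : ℝ × ℝ => f p.1 * (g p.2 * K p.1 p.2))
      (muIcc.prod muIcc) := by
    refine Integrable.mono' ((hf.mul_prod hg).abs.const_mul (max B 0))
      (hf.1.comp_fst.mul (hg.1.comp_snd.mul hK.aestronglyMeasurable)) ?_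
    filter_upwards [hmem] with p hp
    rw [Real.norm_eq_abs]
    have h1 : |f p.1 * (g p.2 * K p.1 p.2)| = |K p.1 p.2| * |f p.1 * g p.2| := by
      rw [abs_mul, abs_mul, abs_mul]; ring
    rw [h1]
    exact mul_le_mul_of_nonneg_right
      ((hKb p.1 hp.1 p.2 hp.2).trans (le_max_left _ _)) (abs_nonneg _)
  calc ∫ z, f z * ∫ w, g w * K z w ∂muIcc ∂muIcc
      = ∫ z, ∫ w, f z * (g w * K z w) ∂muIcc ∂muIcc := by
        refine integral_congr_ae (Eventually.of_forall fun z => ?_)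
        dsimp only
        rw [integral_const_mul]
    _ = ∫ w, ∫ z, f z * (g w * K z w) ∂muIcc ∂muIcc := integral_integral_swap hint
    _ = ∫ w, g w * ∫ z, f z * K z w ∂muIcc ∂muIcc := by
        refine integral_congr_ae (Eventually.of_forall fun w => ?_)
        dsimp only
        rw [← integral_const_mul]
        exact integral_congr_ae (Eventually.of_forall fun z => by ring)
    _ = ∫ z, g z * ∫ w, f w * K z w ∂muIcc ∂muIcc := by
        refine integral_congr_ae (Eventually.of_forall fun w => ?_)
        dsimp only
        congr 1
        exact integral_congr_ae (Eventually.of_forall fun z => by dsimp only; rw [hsym])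

lemma aux_expand (Λ F f p q : ℝ → ℝ) (c₁ c₂ : ℝ) (K E : ℝ → ℝ → ℝ)
    (h1 : Integrable (fun z => F z * (Λ z * f z)) muIcc)
    (h2 : Integrable (fun z => F z * ∫ w, p w * K z w ∂muIcc) muIcc)
    (h3 : Integrable (fun z => F z * ∫ w, q w * E z w ∂muIcc) muIcc) :
    ∫ z, F z * (Λ z * f z + c₁ * (∫ w, p w * K z w ∂muIcc)
        + c₂ * (∫ w, q w * E z w ∂muIcc)) ∂muIcc
      = ∫ z, F z * (Λ z * f z) ∂muIcc
        + c₁ * ∫ z, F z * ∫ w, p w * K z w ∂muIcc ∂muIcc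
        + c₂ * ∫ z, F z * ∫ w, q w * E z w ∂muIcc ∂muIcc := by
  have heq : (fun z => F z * (Λ z * f z + c₁ * (∫ w, p w * K z w ∂muIcc)
      + c₂ * (∫ w, q w * E z w ∂muIcc)))
      = fun z => F z * (Λ z * f z) + c₁ * (F z * ∫ w, p w * K z w ∂muIcc)
        + c₂ * (F z * ∫ w, q w * E z w ∂muIcc) := funext fun z => by ring
  have h2' : Integrable (fun z => c₁ * (F z * ∫ w, p w * K z w ∂muIcc)) muIcc :=
    h2.const_mul c₁
  have h3' : Integrable (fun z => c₂ * (F z * ∫ w, q w * E z w ∂muIcc)) muIcc :=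
    h3.const_mul c₂
  have h12 : Integrable (fun z => F z * (Λ z * f z)
      + c₁ * (F z * ∫ w, p w * K z w ∂muIcc)) muIcc := h1.add h2'
  rw [heq, integral_add h12 h3', integral_add h1 h2', integral_const_mul, integral_const_mul]

end FredholmAux

theorem fredholm_orthogonality_condition (Λp Λm φ' : ℝ → ℝ) (ε : ℝ) (n : ℕ) (hn : 1 ≤ n)
    (hφm : Measurable φ') (Cφ : ℝ) (hφb : ∀ z, |φ' z| ≤ Cφ)
    (hΛpm : Measurable Λp) (CΛ : ℝ) (hΛpb : ∀ z, |Λp z| ≤ CΛ)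
    (hΛmm : Measurable Λm) (hΛmb : ∀ z, |Λm z| ≤ CΛ)
    (a b u v Wp Wm : ℝ → ℝ)
    (ha : MemLp a 2 (MeasureTheory.volume.restrict (Icc (-1:ℝ) 1)))
    (hb : MemLp b 2 (MeasureTheory.volume.restrict (Icc (-1:ℝ) 1)))
    (hu : MemLp u 2 (MeasureTheory.volume.restrict (Icc (-1:ℝ) 1)))
    (hv : MemLp v 2 (MeasureTheory.volume.restrict (Icc (-1:ℝ) 1)))
    (hWp : MemLp Wp 2 (MeasureTheory.volume.restrict (Icc (-1:ℝ) 1)))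
    (hWm : MemLp Wm 2 (MeasureTheory.volume.restrict (Icc (-1:ℝ) 1)))
    (hab₁ : ∀ z ∈ Icc (-1:ℝ) 1, Tplus Λp φ' ε n a b z = 0)
    (hab₂ : ∀ z ∈ Icc (-1:ℝ) 1, Tminus Λm φ' ε n a b z = 0)
    (huv₁ : ∀ z ∈ Icc (-1:ℝ) 1, Tplus Λp φ' ε n u v z = -(Wp z) / n)
    (huv₂ : ∀ z ∈ Icc (-1:ℝ) 1, Tminus Λm φ' ε n u v z = -(Wm z) / n) :
    -(∫ z in Icc (-1:ℝ) 1, Wp z * φ' z * a z)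
        + (∫ z in Icc (-1:ℝ) 1, Wm z * φ' z * b z) = 0 := by
  have hμ : MeasureTheory.volume.restrict (Icc (-1:ℝ) 1) = muIcc := rfl
  rw [hμ] at ha hb hu hv hWp hWm ⊢
  have hmemz : ∀ᵐ z ∂muIcc, z ∈ Icc (-1:ℝ) 1 := ae_restrict_mem measurableSet_Icc
  have hCφ0 : 0 ≤ Cφ := (abs_nonneg _).trans (hφb 0)
  have hCΛ0 : 0 ≤ CΛ := (abs_nonneg _).trans (hΛpb 0)
  -- kernels
  have hKm : Measurable fun p : ℝ × ℝ =>
      Real.exp (-(ε * n) * |p.1 - p.2|) :=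
    ((measurable_fst.sub measurable_snd).abs.const_mul (-(ε * n))).exp
  have hEm : Measurable fun p : ℝ × ℝ =>
      Real.exp (-((n : ℝ) * ε) * (p.1 + p.2)) :=
    ((measurable_fst.add measurable_snd).const_mul (-((n : ℝ) * ε))).exp
  set B : ℝ := Real.exp (2 * |ε| * n) with hBdef
  have hKb : ∀ z ∈ Icc (-1:ℝ) 1, ∀ w ∈ Icc (-1:ℝ) 1,
      |Real.exp (-(ε * n) * |z - w|)| ≤ B := by
    intro z hz w hw
    rw [Real.abs_exp]
    refine Real.exp_le_exp.2 ?_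
    have h1 : |z - w| ≤ 2 := by
      rw [abs_le]; constructor <;> [linarith [hz.1, hz.2, hw.1, hw.2];
        linarith [hz.1, hz.2, hw.1, hw.2]]
    calc -(ε * n) * |z - w| = -((ε * n) * |z - w|) := by ring
      _ ≤ abs ((ε * (n : ℝ)) * |z - w|) := by
          exact neg_le_abs _
      _ = |ε| * (n : ℝ) * |z - w| := by
          rw [abs_mul, abs_mul, Nat.abs_cast, abs_abs]
      _ ≤ 2 * |ε| * n := by
          nlinarith [mul_le_mul_of_nonneg_left h1
            (mul_nonneg (abs_nonneg ε) (Nat.cast_nonneg (α := ℝ) n))]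
  have hEb : ∀ z ∈ Icc (-1:ℝ) 1, ∀ w ∈ Icc (-1:ℝ) 1,
      |Real.exp (-((n : ℝ) * ε) * (z + w))| ≤ B := by
    intro z hz w hw
    rw [Real.abs_exp]
    refine Real.exp_le_exp.2 ?_
    have h1 : |z + w| ≤ 2 := by
      rw [abs_le]; constructor <;> [linarith [hz.1, hz.2, hw.1, hw.2];
        linarith [hz.1, hz.2, hw.1, hw.2]]
    calc -((n : ℝ) * ε) * (z + w) = -(((n : ℝ) * ε) * (z + w)) := by ring
      _ ≤ abs (((n : ℝ) * ε) * (z + w)) := by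
          exact neg_le_abs _
      _ = |ε| * (n : ℝ) * |z + w| := by
          rw [abs_mul, abs_mul, Nat.abs_cast]; ring
      _ ≤ 2 * |ε| * n := by
          nlinarith [mul_le_mul_of_nonneg_left h1
            (mul_nonneg (abs_nonneg ε) (Nat.cast_nonneg (α := ℝ) n))]
  have hKsym : ∀ z w : ℝ, Real.exp (-(ε * n) * |z - w|) = Real.exp (-(ε * n) * |w - z|) :=
    fun z w => by rw [abs_sub_comm]
  have hEsym : ∀ z w : ℝ, Real.exp (-((n : ℝ) * ε) * (z + w))
      = Real.exp (-((n : ℝ) * ε) * (w + z)) := fun z w => by rw [add_comm]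
  -- integrability of base functions
  have ha1 : Integrable a muIcc := ha.integrable (by norm_num)
  have hb1 : Integrable b muIcc := hb.integrable (by norm_num)
  have hu1 : Integrable u muIcc := hu.integrable (by norm_num)
  have hv1 : Integrable v muIcc := hv.integrable (by norm_num)
  have hφbdd : ∀ᵐ x ∂muIcc, ‖φ' x‖ ≤ Cφ :=
    Filter.Eventually.of_forall fun x => by rw [Real.norm_eq_abs]; exact hφb x
  have hA1 : Integrable (fun z => φ' z * a z) muIcc :=
    ha1.bdd_mul hφm.aestronglyMeasurable hφbdd
  have hB1 : Integrable (fun z => φ' z * b z) muIcc :=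
    hb1.bdd_mul hφm.aestronglyMeasurable hφbdd
  have hU1 : Integrable (fun z => φ' z * u z) muIcc :=
    hu1.bdd_mul hφm.aestronglyMeasurable hφbdd
  have hV1 : Integrable (fun z => φ' z * v z) muIcc :=
    hv1.bdd_mul hφm.aestronglyMeasurable hφbdd
  -- integrability of F * (Λ * f) terms
  have hΛterm : ∀ (Λ : ℝ → ℝ), Measurable Λ → (∀ z, |Λ z| ≤ CΛ) →
      ∀ (x f : ℝ → ℝ), MemLp x 2 muIcc → MemLp f 2 muIcc →
      Integrable (fun z => (φ' z * x z) * (Λ z * f z)) muIcc := by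
    intro Λ hΛm hΛb x f hx hf
    have h0 : Integrable (fun z => (φ' z * Λ z) * (x z * f z)) muIcc := by
      refine (aux_mulL2 x f hx hf).bdd_mul (hφm.mul hΛm).aestronglyMeasurable
        (c := Cφ * CΛ) (Filter.Eventually.of_forall fun z => ?_)
      rw [Real.norm_eq_abs, abs_mul]
      exact mul_le_mul (hφb z) (hΛb z) (abs_nonneg _) hCφ0
    exact h0.congr (Filter.Eventually.of_forall fun z => by ring)
  -- expansions
  have E1 : ∫ z, (φ' z * a z) * Tplus Λp φ' ε n u v z ∂muIcc
      = ∫ z, (φ' z * a z) * (Λp z * u z) ∂muIcc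
        + (-(ε / (2 * n))) * ∫ z, (φ' z * a z) *
            ∫ w, (φ' w * u w) * Real.exp (-(ε * n) * |z - w|) ∂muIcc ∂muIcc
        + (ε * Real.exp (-2 * (n : ℝ)) / (2 * n)) * ∫ z, (φ' z * a z) *
            ∫ w, (φ' w * v w) * Real.exp (-((n : ℝ) * ε) * (z + w)) ∂muIcc ∂muIcc := by
    have step : ∫ z, (φ' z * a z) * Tplus Λp φ' ε n u v z ∂muIcc
        = ∫ z, (φ' z * a z) * (Λp z * u z
          + (-(ε / (2 * n))) * (∫ w, (φ' w * u w) * Real.exp (-(ε * n) * |z - w|) ∂muIcc)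
          + (ε * Real.exp (-2 * (n : ℝ)) / (2 * n)) *
              (∫ w, (φ' w * v w) * Real.exp (-((n : ℝ) * ε) * (z + w)) ∂muIcc)) ∂muIcc := by
      refine integral_congr_ae (Filter.Eventually.of_forall fun z => ?_)
      simp only [Tplus, hμ]
      ring
    exact step.trans (aux_expand Λp (fun z => φ' z * a z) u
      (fun w => φ' w * u w) (fun w => φ' w * v w) _ _ _ _
      (hΛterm Λp hΛpm hΛpb a u ha hu)
      (aux_int_mul_J _ _ hA1 hU1 _ hKm B hKb)
      (aux_int_mul_J _ _ hA1 hV1 _ hEm B hEb))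
  have E2 : ∫ z, (φ' z * b z) * Tminus Λm φ' ε n u v z ∂muIcc
      = ∫ z, (φ' z * b z) * (Λm z * v z) ∂muIcc
        + (ε / (2 * n)) * ∫ z, (φ' z * b z) *
            ∫ w, (φ' w * v w) * Real.exp (-(ε * n) * |z - w|) ∂muIcc ∂muIcc
        + (-(ε * Real.exp (-2 * (n : ℝ)) / (2 * n))) * ∫ z, (φ' z * b z) *
            ∫ w, (φ' w * u w) * Real.exp (-((n : ℝ) * ε) * (z + w)) ∂muIcc ∂muIcc := by
    have step : ∫ z, (φ' z * b z) * Tminus Λm φ' ε n u v z ∂muIcc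
        = ∫ z, (φ' z * b z) * (Λm z * v z
          + (ε / (2 * n)) * (∫ w, (φ' w * v w) * Real.exp (-(ε * n) * |z - w|) ∂muIcc)
          + (-(ε * Real.exp (-2 * (n : ℝ)) / (2 * n))) *
              (∫ w, (φ' w * u w) * Real.exp (-((n : ℝ) * ε) * (z + w)) ∂muIcc)) ∂muIcc := by
      refine integral_congr_ae (Filter.Eventually.of_forall fun z => ?_)
      simp only [Tminus, hμ]
      ring
    exact step.trans (aux_expand Λm (fun z => φ' z * b z) v
      (fun w => φ' w * v w) (fun w => φ' w * u w) _ _ _ _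
      (hΛterm Λm hΛmm hΛmb b v hb hv)
      (aux_int_mul_J _ _ hB1 hV1 _ hKm B hKb)
      (aux_int_mul_J _ _ hB1 hU1 _ hEm B hEb))
  have E3 : ∫ z, (φ' z * u z) * Tplus Λp φ' ε n a b z ∂muIcc
      = ∫ z, (φ' z * u z) * (Λp z * a z) ∂muIcc
        + (-(ε / (2 * n))) * ∫ z, (φ' z * u z) *
            ∫ w, (φ' w * a w) * Real.exp (-(ε * n) * |z - w|) ∂muIcc ∂muIcc
        + (ε * Real.exp (-2 * (n : ℝ)) / (2 * n)) * ∫ z, (φ' z * u z) *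
            ∫ w, (φ' w * b w) * Real.exp (-((n : ℝ) * ε) * (z + w)) ∂muIcc ∂muIcc := by
    have step : ∫ z, (φ' z * u z) * Tplus Λp φ' ε n a b z ∂muIcc
        = ∫ z, (φ' z * u z) * (Λp z * a z
          + (-(ε / (2 * n))) * (∫ w, (φ' w * a w) * Real.exp (-(ε * n) * |z - w|) ∂muIcc)
          + (ε * Real.exp (-2 * (n : ℝ)) / (2 * n)) *
              (∫ w, (φ' w * b w) * Real.exp (-((n : ℝ) * ε) * (z + w)) ∂muIcc)) ∂muIcc := by
      refine integral_congr_ae (Filter.Eventually.of_forall fun z => ?_)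
      simp only [Tplus, hμ]
      ring
    exact step.trans (aux_expand Λp (fun z => φ' z * u z) a
      (fun w => φ' w * a w) (fun w => φ' w * b w) _ _ _ _
      (hΛterm Λp hΛpm hΛpb u a hu ha)
      (aux_int_mul_J _ _ hU1 hA1 _ hKm B hKb)
      (aux_int_mul_J _ _ hU1 hB1 _ hEm B hEb))
  have E4 : ∫ z, (φ' z * v z) * Tminus Λm φ' ε n a b z ∂muIcc
      = ∫ z, (φ' z * v z) * (Λm z * b z) ∂muIcc
        + (ε / (2 * n)) * ∫ z, (φ' z * v z) *
            ∫ w, (φ' w * b w) * Real.exp (-(ε * n) * |z - w|) ∂muIcc ∂muIcc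
        + (-(ε * Real.exp (-2 * (n : ℝ)) / (2 * n))) * ∫ z, (φ' z * v z) *
            ∫ w, (φ' w * a w) * Real.exp (-((n : ℝ) * ε) * (z + w)) ∂muIcc ∂muIcc := by
    have step : ∫ z, (φ' z * v z) * Tminus Λm φ' ε n a b z ∂muIcc
        = ∫ z, (φ' z * v z) * (Λm z * b z
          + (ε / (2 * n)) * (∫ w, (φ' w * b w) * Real.exp (-(ε * n) * |z - w|) ∂muIcc)
          + (-(ε * Real.exp (-2 * (n : ℝ)) / (2 * n))) *
              (∫ w, (φ' w * a w) * Real.exp (-((n : ℝ) * ε) * (z + w)) ∂muIcc)) ∂muIcc := by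
      refine integral_congr_ae (Filter.Eventually.of_forall fun z => ?_)
      simp only [Tminus, hμ]
      ring
    exact step.trans (aux_expand Λm (fun z => φ' z * v z) b
      (fun w => φ' w * b w) (fun w => φ' w * a w) _ _ _ _
      (hΛterm Λm hΛmm hΛmb v b hv hb)
      (aux_int_mul_J _ _ hV1 hB1 _ hKm B hKb)
      (aux_int_mul_J _ _ hV1 hA1 _ hEm B hEb))
  -- symmetry swaps
  have S1 : ∫ z, (φ' z * a z) *
        ∫ w, (φ' w * u w) * Real.exp (-(ε * n) * |z - w|) ∂muIcc ∂muIcc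
      = ∫ z, (φ' z * u z) *
        ∫ w, (φ' w * a w) * Real.exp (-(ε * n) * |z - w|) ∂muIcc ∂muIcc :=
    aux_swap _ _ hA1 hU1 _ hKm B hKb hKsym
  have S2 : ∫ z, (φ' z * a z) *
        ∫ w, (φ' w * v w) * Real.exp (-((n : ℝ) * ε) * (z + w)) ∂muIcc ∂muIcc
      = ∫ z, (φ' z * v z) *
        ∫ w, (φ' w * a w) * Real.exp (-((n : ℝ) * ε) * (z + w)) ∂muIcc ∂muIcc :=
    aux_swap _ _ hA1 hV1 _ hEm B hEb hEsym
  have S3 : ∫ z, (φ' z * b z) *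
        ∫ w, (φ' w * v w) * Real.exp (-(ε * n) * |z - w|) ∂muIcc ∂muIcc
      = ∫ z, (φ' z * v z) *
        ∫ w, (φ' w * b w) * Real.exp (-(ε * n) * |z - w|) ∂muIcc ∂muIcc :=
    aux_swap _ _ hB1 hV1 _ hKm B hKb hKsym
  have S4 : ∫ z, (φ' z * b z) *
        ∫ w, (φ' w * u w) * Real.exp (-((n : ℝ) * ε) * (z + w)) ∂muIcc ∂muIcc
      = ∫ z, (φ' z * u z) *
        ∫ w, (φ' w * b w) * Real.exp (-((n : ℝ) * ε) * (z + w)) ∂muIcc ∂muIcc :=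
    aux_swap _ _ hB1 hU1 _ hEm B hEb hEsym
  -- diagonal terms
  have T1 : ∫ z, (φ' z * a z) * (Λp z * u z) ∂muIcc
      = ∫ z, (φ' z * u z) * (Λp z * a z) ∂muIcc :=
    integral_congr_ae (Filter.Eventually.of_forall fun z => by ring)
  have T2 : ∫ z, (φ' z * b z) * (Λm z * v z) ∂muIcc
      = ∫ z, (φ' z * v z) * (Λm z * b z) ∂muIcc :=
    integral_congr_ae (Filter.Eventually.of_forall fun z => by ring)
  -- main adjointness identity
  have main : -(∫ z, (φ' z * a z) * Tplus Λp φ' ε n u v z ∂muIcc)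
      + ∫ z, (φ' z * b z) * Tminus Λm φ' ε n u v z ∂muIcc
      = -(∫ z, (φ' z * u z) * Tplus Λp φ' ε n a b z ∂muIcc)
        + ∫ z, (φ' z * v z) * Tminus Λm φ' ε n a b z ∂muIcc := by
    rw [E1, E2, E3, E4, S1, S2, S3, S4, T1, T2]
    ring
  -- evaluate the four integrals
  have Z3 : ∫ z, (φ' z * u z) * Tplus Λp φ' ε n a b z ∂muIcc = 0 := by
    have h : (fun z => (φ' z * u z) * Tplus Λp φ' ε n a b z) =ᵐ[muIcc]
        fun _ => (0 : ℝ) := by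
      filter_upwards [hmemz] with z hz
      rw [hab₁ z hz, mul_zero]
    rw [integral_congr_ae h, integral_zero]
  have Z4 : ∫ z, (φ' z * v z) * Tminus Λm φ' ε n a b z ∂muIcc = 0 := by
    have h : (fun z => (φ' z * v z) * Tminus Λm φ' ε n a b z) =ᵐ[muIcc]
        fun _ => (0 : ℝ) := by
      filter_upwards [hmemz] with z hz
      rw [hab₂ z hz, mul_zero]
    rw [integral_congr_ae h, integral_zero]
  have Z1 : ∫ z, (φ' z * a z) * Tplus Λp φ' ε n u v z ∂muIcc
      = (-(1:ℝ)/n) * ∫ z, (φ' z * a z) * Wp z ∂muIcc := by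
    rw [← integral_const_mul]
    refine integral_congr_ae ?_
    filter_upwards [hmemz] with z hz
    rw [huv₁ z hz]
    ring
  have Z2 : ∫ z, (φ' z * b z) * Tminus Λm φ' ε n u v z ∂muIcc
      = (-(1:ℝ)/n) * ∫ z, (φ' z * b z) * Wm z ∂muIcc := by
    rw [← integral_const_mul]
    refine integral_congr_ae ?_
    filter_upwards [hmemz] with z hz
    rw [huv₂ z hz]
    ring
  rw [Z1, Z2, Z3, Z4] at main
  have hn' : (n : ℝ) ≠ 0 := Nat.cast_ne_zero.2 (by omega)
  have key : ∫ z, (φ' z * a z) * Wp z ∂muIcc = ∫ z, (φ' z * b z) * Wm z ∂muIcc := by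
    field_simp at main
    linarith
  have G1 : ∫ z, Wp z * φ' z * a z ∂muIcc = ∫ z, (φ' z * a z) * Wp z ∂muIcc :=
    integral_congr_ae (Filter.Eventually.of_forall fun z => by ring)
  have G2 : ∫ z, Wm z * φ' z * b z ∂muIcc = ∫ z, (φ' z * b z) * Wm z ∂muIcc :=
    integral_congr_ae (Filter.Eventually.of_forall fun z => by ring)
  rw [G1, G2, key]
  ring
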